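/- Let A be an n×n real matrix, let x ∈ ker A be nonzero, and let i ≠ j be indices such that ker A = F_{i,j}(A)^⊥. Let (i,j,k,ℓ) be a quadruple in which a simple switching can be performed on A with x_k ≠ x_ℓ, and let Ā be the matrix obtained from A by this switching. Then rank Ā = rank A + 1. -/

import Mathlib

open Matrix

/-- `𝒜_{n,d}`: 0/1 matrices with exactly `d` ones in every row and column. -/
def IsRegAdj (n d : ℕ) (A : Matrix (Fin n) (Fin n) ℝ) : Prop :=
  (∀ i j, A i j = 0 ∨ A i j = 1) ∧
  (∀ i, {j : Fin n | A i j = 1}.ncard = d) ∧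
  (∀ j, {i : Fin n | A i j = 1}.ncard = d)

/-- A simple switching can be performed in `(i, j, k, l)`. -/
def CanSwitch {n : ℕ} (A : Matrix (Fin n) (Fin n) ℝ) (i j k l : Fin n) : Prop :=
  A i k = 1 ∧ A j l = 1 ∧ A i l = 0 ∧ A j k = 0

/-- The matrix obtained from `A` by the simple switching in `(i, j, k, l)`. -/
def switch {n : ℕ} (A : Matrix (Fin n) (Fin n) ℝ) (i j k l : Fin n) :
    Matrix (Fin n) (Fin n) ℝ :=
  Matrix.of fun s t =>
    if (s = i ∧ t = k) ∨ (s = j ∧ t = l) then 0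
    else if (s = i ∧ t = l) ∨ (s = j ∧ t = k) then 1
    else A s t

/-- `F_{i,j}(A)`: the span of the rows of `A` other than the `i`-th and the `j`-th,
together with `R_i + R_j`. -/
def rowSpanF {n : ℕ} (A : Matrix (Fin n) (Fin n) ℝ) (i j : Fin n) :
    Submodule ℝ (Fin n → ℝ) :=
  Submodule.span ℝ (insert (A i + A j) {r : Fin n → ℝ | ∃ s, s ≠ i ∧ s ≠ j ∧ r = A s})

/-- Orthogonal complement w.r.t. the standard inner product on `ℝⁿ`. -/
def perp {n : ℕ} (F : Submodule ℝ (Fin n → ℝ)) : Submodule ℝ (Fin n → ℝ) where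
  carrier := {x | ∀ v ∈ F, v ⬝ᵥ x = 0}
  zero_mem' := by intro v hv; simp
  add_mem' := by intro a b ha hb v hv; simp [dotProduct_add, ha v hv, hb v hv]
  smul_mem' := by intro c x hx v hv; simp [dotProduct_smul, hx v hv]

/-- `A` is `β`-delocalized: no level set of a nonzero null vector (of `A` or `Aᵀ`)
has more than `β` coordinates. -/
def Delocalized {n : ℕ} (β : ℝ) (A : Matrix (Fin n) (Fin n) ℝ) : Prop :=
  ∀ x : Fin n → ℝ, x ≠ 0 →
    (x ∈ LinearMap.ker A.mulVecLin ∨ x ∈ LinearMap.ker Aᵀ.mulVecLin) →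
    ∀ lam : ℝ, ({i : Fin n | x i = lam}.ncard : ℝ) ≤ β


section Aux

variable {n : ℕ}

/-- The dot product as a bilinear form on `ℝⁿ`. -/
noncomputable def dotB (n : ℕ) : LinearMap.BilinForm ℝ (Fin n → ℝ) :=
  LinearMap.mk₂ ℝ dotProduct add_dotProduct smul_dotProduct
    dotProduct_add dotProduct_smul

@[simp] lemma dotB_apply (v w : Fin n → ℝ) : dotB n v w = v ⬝ᵥ w := rfl

lemma dotB_refl : (dotB n).IsRefl := fun v w h => by
  simpa [dotProduct_comm] using h

lemma dotB_nondeg : (dotB n).Nondegenerate := ⟨fun v h => by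
  have := h v
  rwa [dotB_apply, dotProduct_self_eq_zero] at this, fun v h => by
  have := h v
  rwa [dotB_apply, dotProduct_self_eq_zero] at this⟩

lemma perp_eq_orthogonal (F : Submodule ℝ (Fin n → ℝ)) :
    perp F = (dotB n).orthogonal F := by
  ext w
  simp only [LinearMap.BilinForm.mem_orthogonal_iff, LinearMap.BilinForm.isOrtho_def, dotB_apply]
  rfl

lemma ker_eq_perp_rowspace (M : Matrix (Fin n) (Fin n) ℝ) :
    LinearMap.ker M.mulVecLin = perp (Submodule.span ℝ (Set.range M)) := by
  ext w
  constructor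
  · intro hw v hv
    have hrow : ∀ s, M s ⬝ᵥ w = 0 := by
      intro s
      have : M.mulVec w = 0 := hw
      exact congrFun this s
    induction hv using Submodule.span_induction with
    | mem v hv => obtain ⟨s, rfl⟩ := hv; exact hrow s
    | zero => simp
    | add a b _ _ ha hb => simp [add_dotProduct, ha, hb]
    | smul c a _ ha => simp [smul_dotProduct, ha]
  · intro hw
    have : M.mulVec w = 0 := by
      funext s
      exact hw (M s) (Submodule.subset_span ⟨s, rfl⟩)
    exact this

end Aux

/-- a switching on rows `i, j` with `(i,j) ∈ K_A` which is not `x`-bad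
increases the rank by one. -/
theorem stmt_12 (n : ℕ) (A : Matrix (Fin n) (Fin n) ℝ)
    (x : Fin n → ℝ) (hx : x ∈ LinearMap.ker A.mulVecLin) (hx0 : x ≠ 0)
    (i j k l : Fin n) (hij : i ≠ j)
    (hker : LinearMap.ker A.mulVecLin = perp (rowSpanF A i j))
    (h : CanSwitch A i j k l) (hkl : x k ≠ x l) :
    (switch A i j k l).rank = A.rank + 1 := by
  classical
  obtain ⟨hik, hjl, hil, hjk⟩ := h
  set Ab := switch A i j k l with hAb
  set F := rowSpanF A i j with hF
  -- k ≠ l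
  have hkl' : k ≠ l := by
    rintro rfl
    rw [hik] at hil
    norm_num at hil
  -- rows of the switched matrix
  have hrow_other : ∀ s, s ≠ i → s ≠ j → Ab s = A s := by
    intro s hsi hsj
    funext t
    simp [hAb, switch, hsi, hsj]
  have hsum : Ab i + Ab j = A i + A j := by
    funext t
    rcases eq_or_ne t k with rfl | htk
    · simp [hAb, switch, hij, hij.symm, hkl', hkl'.symm, hik, hjk]
    rcases eq_or_ne t l with rfl | htl
    · simp [hAb, switch, hij, hij.symm, hkl', hkl'.symm, hil, hjl]
    · simp [hAb, switch, htk, htl]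

  have hvi : Ab i = A i - Pi.single k 1 + Pi.single l 1 := by
    funext t
    rcases eq_or_ne t k with rfl | htk
    · simp [hAb, switch, hik, hkl'.symm, Pi.single_eq_of_ne]
    rcases eq_or_ne t l with rfl | htl
    · simp [hAb, switch, hij, hij.symm, hkl', hkl'.symm, hil, Pi.single_eq_of_ne hkl']
    · simp [hAb, switch, htk, htl, Pi.single_eq_of_ne htk, Pi.single_eq_of_ne htl]
  -- rows of A dot x vanish
  have hAdot : ∀ s, A s ⬝ᵥ x = 0 := by
    intro s
    have : A.mulVec x = 0 := hx
    exact congrFun this s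
  have hvdot : Ab i ⬝ᵥ x = x l - x k := by
    rw [hvi]
    simp only [add_dotProduct, sub_dotProduct, single_dotProduct, hAdot i,
      one_mul]
    ring
  have hvdot_ne : Ab i ⬝ᵥ x ≠ 0 := by
    rw [hvdot]
    exact sub_ne_zero_of_ne (Ne.symm hkl)
  have hv0 : Ab i ≠ 0 := by
    intro h0
    rw [h0] at hvdot_ne
    exact hvdot_ne (zero_dotProduct x)
  -- x ∈ perp F, so Ab i ∉ F
  have hxperp : x ∈ perp F := hker ▸ hx
  have hvF : Ab i ∉ F := fun hvF => hvdot_ne (hxperp (Ab i) hvF)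
  -- the row space of A equals F
  have hFle : F ≤ Submodule.span ℝ (Set.range A) := by
    rw [hF, rowSpanF, Submodule.span_le]
    rintro r (rfl | ⟨s, _, _, rfl⟩)
    · exact Submodule.add_mem _ (Submodule.subset_span ⟨i, rfl⟩) (Submodule.subset_span ⟨j, rfl⟩)
    · exact Submodule.subset_span ⟨s, rfl⟩
  have hperp_eq : perp (Submodule.span ℝ (Set.range A)) = perp F := by
    rw [← ker_eq_perp_rowspace, hker]
  have hrowA : Submodule.span ℝ (Set.range A) = F := by
    have h1 : (dotB n).orthogonal (Submodule.span ℝ (Set.range A)) = (dotB n).orthogonal F := by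
      rw [← perp_eq_orthogonal, ← perp_eq_orthogonal, hperp_eq]
    calc Submodule.span ℝ (Set.range A)
        = (dotB n).orthogonal ((dotB n).orthogonal (Submodule.span ℝ (Set.range A))) :=
          (LinearMap.BilinForm.orthogonal_orthogonal dotB_nondeg dotB_refl _).symm
      _ = (dotB n).orthogonal ((dotB n).orthogonal F) := by rw [h1]
      _ = F := LinearMap.BilinForm.orthogonal_orthogonal dotB_nondeg dotB_refl _
  -- the row space of Ab equals F ⊔ span {Ab i}
  have hrowAb : Submodule.span ℝ (Set.range Ab) = F ⊔ Submodule.span ℝ {Ab i} := by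
    apply le_antisymm
    · rw [Submodule.span_le]
      rintro r ⟨s, rfl⟩
      rcases eq_or_ne s i with rfl | hsi
      · exact Submodule.mem_sup_right (Submodule.subset_span rfl)
      rcases eq_or_ne s j with rfl | hsj
      · have : Ab s = (A i + A s) - Ab i := by
          rw [← hsum]; abel
        rw [this]
        refine Submodule.sub_mem _ (Submodule.mem_sup_left ?_)
          (Submodule.mem_sup_right (Submodule.subset_span rfl))
        exact Submodule.subset_span (Set.mem_insert _ _)
      · rw [hrow_other s hsi hsj]
        exact Submodule.mem_sup_left (Submodule.subset_span (Set.mem_insert_of_mem _ ⟨s, hsi, hsj, rfl⟩))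
    · refine sup_le ?_ ?_
      · rw [hF, rowSpanF, Submodule.span_le]
        rintro r (rfl | ⟨s, hsi, hsj, rfl⟩)
        · rw [← hsum]
          exact Submodule.add_mem _ (Submodule.subset_span ⟨i, rfl⟩)
            (Submodule.subset_span ⟨j, rfl⟩)
        · rw [← hrow_other s hsi hsj]
          exact Submodule.subset_span ⟨s, rfl⟩
      · rw [Submodule.span_le, Set.singleton_subset_iff]
        exact Submodule.subset_span ⟨i, rfl⟩
  -- the intersection is trivial
  have hinf : F ⊓ Submodule.span ℝ {Ab i} = ⊥ := by
    rw [eq_bot_iff]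
    rintro y ⟨hyF, hyv⟩
    obtain ⟨c, rfl⟩ := Submodule.mem_span_singleton.mp hyv
    rcases eq_or_ne c 0 with rfl | hc
    · simp
    · exact absurd (by simpa [smul_smul, inv_mul_cancel₀ hc] using F.smul_mem c⁻¹ hyF) hvF
  -- finrank computation
  have hdim : Module.finrank ℝ ↥(F ⊔ Submodule.span ℝ {Ab i}) = Module.finrank ℝ ↥F + 1 := by
    have := Submodule.finrank_sup_add_finrank_inf_eq F (Submodule.span ℝ {Ab i})
    rw [hinf, finrank_bot, finrank_span_singleton hv0] at this
    omega
  rw [Matrix.rank_eq_finrank_span_row, Matrix.rank_eq_finrank_span_row]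
  change Module.finrank ℝ ↥(Submodule.span ℝ (Set.range Ab)) = Module.finrank ℝ ↥(Submodule.span ℝ (Set.range A)) + 1
  rw [hrowAb, hrowA, hdim]
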